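/- Let n ≥ 1. There exists a real number α₀ ≥ 1, depending only on n, such that for every real α > α₀ the following holds: for every strictly increasing sequence of integers p₁ < p₂ < ⋯ < pₙ, the vector (α^{p₁}, α^{p₂}, …, α^{pₙ}) ∈ ℝⁿ does not belong to the ℝ-linear span of any subset T of Q̃^{BCD} with card T ≤ n − 1. -/

import Mathlib

/-- The set `Q̃^{BCD} ⊆ ℝⁿ`: all `±e_j` and all `±e_i ± e_j` for `i < j`. -/
def QBCD (n : ℕ) : Set (Fin n → ℝ) :=
  {v | (∃ j : Fin n, v = Pi.single j (1 : ℝ) ∨ v = -Pi.single j (1 : ℝ)) ∨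
    ∃ i j : Fin n, i < j ∧
      (v = Pi.single i (1 : ℝ) + Pi.single j (1 : ℝ) ∨
       v = Pi.single i (1 : ℝ) - Pi.single j (1 : ℝ) ∨
       v = -Pi.single i (1 : ℝ) + Pi.single j (1 : ℝ) ∨
       v = -Pi.single i (1 : ℝ) - Pi.single j (1 : ℝ))}

/-- for all sufficiently large `α`, a vector
`(α^{p₁}, …, α^{pₙ})` with strictly increasing integer exponents lies in no
span of at most `n − 1` elements of `Q̃^{BCD}`. -/
def Mem3 (x : ℝ) : Prop := x = -1 ∨ x = 0 ∨ x = 1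

lemma mem3_mul {x y : ℝ} (hx : Mem3 x) (hy : Mem3 y) : Mem3 (x * y) := by
  rcases hx with h | h | h <;> rcases hy with h' | h' | h' <;>
    simp [Mem3, h, h']

lemma mem3_neg {x : ℝ} (hx : Mem3 x) : Mem3 (-x) := by
  rcases hx with h | h | h <;> simp [Mem3, h]

/-- Every element of QBCD decomposes as εa • e_a + εb • e_b. -/
lemma qbcd_repr {n : ℕ} {t : Fin n → ℝ} (ht : t ∈ QBCD n) :
    ∃ (a b : Fin n) (εa εb : ℝ), (εa = -1 ∨ εa = 1) ∧ Mem3 εb ∧ (a = b → εb = 0) ∧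
      ∀ k, t k = εa * (Pi.single a 1 : Fin n → ℝ) k + εb * (Pi.single b 1 : Fin n → ℝ) k := by
  rcases ht with ⟨j, h | h⟩ | ⟨i, j, hij, h | h | h | h⟩
  · exact ⟨j, j, 1, 0, Or.inr rfl, Or.inr (Or.inl rfl), fun _ => rfl, by intro k; simp [h]⟩
  · exact ⟨j, j, -1, 0, Or.inl rfl, Or.inr (Or.inl rfl), fun _ => rfl, by intro k; simp [h]⟩
  · exact ⟨i, j, 1, 1, Or.inr rfl, Or.inr (Or.inr rfl), fun hab => absurd hab hij.ne, by intro k; simp [h]⟩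
  · exact ⟨i, j, 1, -1, Or.inr rfl, Or.inl rfl, fun hab => absurd hab hij.ne, by intro k; simp [h]; try ring⟩
  · exact ⟨i, j, -1, 1, Or.inl rfl, Or.inr (Or.inr rfl), fun hab => absurd hab hij.ne, by intro k; simp [h]; try ring⟩
  · exact ⟨i, j, -1, -1, Or.inl rfl, Or.inl rfl, fun hab => absurd hab hij.ne, by intro k; simp [h]; try ring⟩

lemma qbcd_entries {n : ℕ} {t : Fin n → ℝ} (ht : t ∈ QBCD n) (k : Fin n) : Mem3 (t k) := by
  obtain ⟨a, b, εa, εb, hεa, hεb, hab, hrepr⟩ := qbcd_repr ht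
  rw [hrepr k]
  by_cases hka : k = a <;> by_cases hkb : k = b
  · subst hka; have : εb = 0 := hab hkb; subst this
    rcases hεa with h | h <;> simp [h, Mem3]
  · subst hka
    rcases hεa with h | h <;> simp [h, Pi.single_apply, Ne.symm hkb, Mem3]
  · subst hkb
    simp [Pi.single_apply, Ne.symm hka]
    rcases hεb with h | h | h <;> simp [h, Mem3]
  · simp [Pi.single_apply, Ne.symm hka, Ne.symm hkb, Mem3]

lemma qbcd_support_card {n : ℕ} {t : Fin n → ℝ} (ht : t ∈ QBCD n) (S : Finset (Fin n)) :
    (S.filter (fun j => t j ≠ 0)).card ≤ 2 := by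
  obtain ⟨a, b, εa, εb, hεa, hεb, hab, hrepr⟩ := qbcd_repr ht
  have hsub : S.filter (fun j => t j ≠ 0) ⊆ {a, b} := by
    intro k hk
    simp only [Finset.mem_filter] at hk
    by_contra hk2
    simp only [Finset.mem_insert, Finset.mem_singleton, not_or] at hk2
    apply hk.2
    rw [hrepr k]
    simp [Pi.single_apply, Ne.symm hk2.1, Ne.symm hk2.2]
  calc (S.filter (fun j => t j ≠ 0)).card ≤ ({a, b} : Finset (Fin n)).card :=
        Finset.card_le_card hsub
    _ ≤ 2 := Finset.card_insert_le a {b} |>.trans (by simp)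

lemma exists_low_degree {n : ℕ} (T : Finset (Fin n → ℝ)) (S : Finset (Fin n))
    (hT : ↑T ⊆ QBCD n) (hcard : T.card < S.card) :
    ∃ j ∈ S, (T.filter (fun t => t j ≠ 0)).card ≤ 1 := by
  by_contra hcon
  push_neg at hcon
  have h2 : 2 * S.card ≤ ∑ j ∈ S, (T.filter (fun t => t j ≠ 0)).card := by
    rw [two_mul]
    calc S.card + S.card = ∑ _j ∈ S, 2 := by rw [Finset.sum_const, smul_eq_mul]; omega
      _ ≤ _ := Finset.sum_le_sum (fun j hj => hcon j hj)
  have h3 : ∑ j ∈ S, (T.filter (fun t => t j ≠ 0)).card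
      = ∑ t ∈ T, (S.filter (fun j => t j ≠ 0)).card := by
    have := Finset.sum_comm (s := S) (t := T) (f := fun j t => if t j ≠ 0 then (1:ℕ) else 0)
    simpa [Finset.card_filter] using this
  have h4 : ∑ t ∈ T, (S.filter (fun j => t j ≠ 0)).card ≤ 2 * T.card := by
    calc ∑ t ∈ T, (S.filter (fun j => t j ≠ 0)).card ≤ ∑ _t ∈ T, 2 :=
          Finset.sum_le_sum (fun t htT => qbcd_support_card (hT htT) S)
      _ = 2 * T.card := by simp [mul_comm]
  rw [h3] at h2
  have h5 := h2.trans h4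
  have h6 : S.card ≤ T.card := Nat.le_of_mul_le_mul_left h5 (by norm_num)
  exact absurd hcard (not_lt.mpr h6)

lemma exists_perp {n : ℕ} : ∀ (k : ℕ) (T : Finset (Fin n → ℝ)) (S : Finset (Fin n)),
    T.card = k → ↑T ⊆ QBCD n → (∀ t ∈ T, ∀ i, t i ≠ 0 → i ∈ S) → T.card < S.card →
    ∃ l : Fin n → ℝ, (∀ i, Mem3 (l i)) ∧ (∀ i, l i ≠ 0 → i ∈ S) ∧ (∃ i, l i ≠ 0) ∧
      ∀ t ∈ T, ∑ i, l i * t i = 0 := by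
  intro k
  induction k with
  | zero =>
    intro T S hcardk hT hsupp hcard
    rw [hcardk] at hcard
    obtain ⟨j, hj⟩ := Finset.card_pos.mp hcard
    refine ⟨Pi.single j 1, ?_, ?_, ⟨j, by simp⟩, ?_⟩
    · intro i
      by_cases h : i = j <;> simp [Pi.single_apply, h, Mem3]
    · intro i hi
      by_cases h : i = j
      · exact h ▸ hj
      · simp [Pi.single_apply, h] at hi
    · intro t ht
      exact absurd ht (by simp [Finset.card_eq_zero.mp hcardk])
  | succ k ih =>
    intro T S hcardk hT hsupp hcard
    obtain ⟨j, hjS, hdeg⟩ := exists_low_degree T S hT hcard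
    by_cases h0 : ∀ t ∈ T, t j = 0
    · refine ⟨Pi.single j 1, ?_, ?_, ⟨j, by simp⟩, ?_⟩
      · intro i
        by_cases h : i = j <;> simp [Pi.single_apply, h, Mem3]
      · intro i hi
        by_cases h : i = j
        · exact h ▸ hjS
        · simp [Pi.single_apply, h] at hi
      · intro t ht
        have : ∑ i, (Pi.single j 1 : Fin n → ℝ) i * t i = t j := by
          simp [Pi.single_apply, ite_mul]
        rw [this, h0 t ht]
    · push_neg at h0
      obtain ⟨t₀, ht₀T, ht₀j⟩ := h0
      -- uniqueness of t₀
      have huniq : ∀ t ∈ T, t j ≠ 0 → t = t₀ := by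
        intro t ht htj
        have h1 := Finset.card_le_one.mp hdeg t (Finset.mem_filter.mpr ⟨ht, htj⟩)
          t₀ (Finset.mem_filter.mpr ⟨ht₀T, ht₀j⟩)
        exact h1
      -- recurse
      have hcard' : (T.erase t₀).card = k := by
        rw [Finset.card_erase_of_mem ht₀T, hcardk]
        rfl
      have hTsub' : ↑(T.erase t₀) ⊆ QBCD n := fun t ht => hT (Finset.erase_subset _ _ ht)
      have hsupp' : ∀ t ∈ T.erase t₀, ∀ i, t i ≠ 0 → i ∈ S.erase j := by
        intro t ht i hti
        refine Finset.mem_erase.mpr ⟨?_, hsupp t (Finset.mem_of_mem_erase ht) i hti⟩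
        intro hij
        exact (Finset.ne_of_mem_erase ht) (huniq t (Finset.mem_of_mem_erase ht) (hij ▸ hti))
      have hcard'' : (T.erase t₀).card < (S.erase j).card := by
        rw [hcard', Finset.card_erase_of_mem hjS]
        exact Nat.lt_sub_of_add_lt (hcardk ▸ hcard)
      obtain ⟨l', hl'mem, hl'supp, ⟨i₀, hi₀⟩, hl'orth⟩ :=
        ih (T.erase t₀) (S.erase j) hcard' hTsub' hsupp' hcard''
      have hl'j : l' j = 0 := by
        by_contra h
        exact (Finset.mem_erase.mp (hl'supp j h)).1 rfl
      set s : ℝ := ∑ i, l' i * t₀ i with hs_def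
      set c : ℝ := -s * t₀ j with hc_def
      -- c is in {-1,0,1}
      have ht₀mem3 : ∀ i, Mem3 (t₀ i) := qbcd_entries (hT ht₀T)
      have hsmem3 : Mem3 s := by
        obtain ⟨a, b, εa, εb, hεa, hεb, hab, hrepr⟩ := qbcd_repr (hT ht₀T)
        have hsab : s = εa * l' a + εb * l' b := by
          rw [hs_def]
          simp only [hrepr, Pi.single_apply, mul_add, mul_ite, mul_one, mul_zero]
          rw [Finset.sum_add_distrib]
          congr 1 <;> simp [Finset.sum_ite_eq', mul_comm]
        have hjab : j = a ∨ j = b := by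
          by_contra hc2
          push_neg at hc2
          apply ht₀j
          rw [hrepr j]
          simp [Pi.single_apply, Ne.symm hc2.1, Ne.symm hc2.2]
        have hεa3 : Mem3 εa := hεa.imp id Or.inr
        rcases hjab with rfl | rfl
        · rw [hsab, hl'j, mul_zero, zero_add]
          exact mem3_mul hεb (hl'mem b)
        · rw [hsab, hl'j, mul_zero, add_zero]
          exact mem3_mul hεa3 (hl'mem a)
      have hcmem3 : Mem3 c := by
        rw [hc_def]
        exact mem3_mul (mem3_neg hsmem3) (ht₀mem3 j)
      set l : Fin n → ℝ := Function.update l' j c with hl_def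
      have key : ∀ t : Fin n → ℝ, (∑ i, l i * t i) = (∑ i, l' i * t i) + c * t j := by
        intro t
        have hterm : ∀ i : Fin n, l i * t i = l' i * t i + (if i = j then c * t i else 0) := by
          intro i
          by_cases hi : i = j
          · subst hi
            rw [hl_def, Function.update_self, hl'j]
            simp
          · rw [hl_def, Function.update_of_ne hi]
            simp [hi]
        rw [Finset.sum_congr rfl (fun i _ => hterm i), Finset.sum_add_distrib]
        congr 1
        simp [Finset.sum_ite_eq']
      refine ⟨l, ?_, ?_, ⟨i₀, ?_⟩, ?_⟩
      · intro i
        by_cases hi : i = j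
        · subst hi; rw [hl_def, Function.update_self]; exact hcmem3
        · rw [hl_def, Function.update_of_ne hi]; exact hl'mem i
      · intro i hi
        by_cases hij : i = j
        · exact hij ▸ hjS
        · rw [hl_def, Function.update_of_ne hij] at hi
          exact Finset.mem_of_mem_erase (hl'supp i hi)
      · have hij : i₀ ≠ j := fun h => (Finset.mem_erase.mp (hl'supp i₀ hi₀)).1 h
        rw [hl_def, Function.update_of_ne hij]
        exact hi₀
      · intro t htT
        rw [key t]
        by_cases ht : t = t₀
        · rw [ht, ← hs_def, hc_def]
          have ht₀j1 : t₀ j * t₀ j = 1 := by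
            rcases ht₀mem3 j with h | h | h
            · rw [h]; norm_num
            · exact absurd h ht₀j
            · rw [h]; norm_num
          calc s + -s * t₀ j * t₀ j = s + -s * (t₀ j * t₀ j) := by ring
            _ = 0 := by rw [ht₀j1]; ring
        · have htj : t j = 0 := by
            by_contra h
            exact ht (huniq t htT h)
          rw [hl'orth t (Finset.mem_erase.mpr ⟨ht, htT⟩), htj, mul_zero, add_zero]

theorem zpow_vector_not_mem_span_QBCD (n : ℕ) (hn : 1 ≤ n) :
    ∃ α₀ : ℝ, 1 ≤ α₀ ∧ ∀ α : ℝ, α₀ < α →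
      ∀ p : Fin n → ℤ, StrictMono p →
        ∀ T : Finset (Fin n → ℝ), ↑T ⊆ QBCD n → T.card ≤ n - 1 →
          (fun i : Fin n => α ^ (p i)) ∉ Submodule.span ℝ (T : Set (Fin n → ℝ)) := by
  refine ⟨(n : ℝ), by exact_mod_cast hn, ?_⟩
  intro α hα p hp T hTsub hTcard hv
  have hn1 : (1 : ℝ) ≤ n := by exact_mod_cast hn
  have hα1 : (1 : ℝ) < α := lt_of_le_of_lt hn1 hα
  have hαpos : (0 : ℝ) < α := lt_trans one_pos hα1
  have hcardlt : T.card < (Finset.univ : Finset (Fin n)).card := by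
    rw [Finset.card_univ, Fintype.card_fin]
    exact Nat.lt_of_le_of_lt hTcard (Nat.sub_lt hn one_pos)
  obtain ⟨l, hmem, _, ⟨i₀, hi₀⟩, horth⟩ :=
    exists_perp T.card T Finset.univ rfl hTsub (fun _ _ i _ => Finset.mem_univ i) hcardlt
  -- the functional vanishes on the span
  have hspan : ∀ x ∈ Submodule.span ℝ (T : Set (Fin n → ℝ)), ∑ i, l i * x i = 0 := by
    intro x hx
    induction hx using Submodule.span_induction with
    | mem x hx => exact horth x hx
    | zero => simp
    | add x y _ _ hx hy => simp [mul_add, Finset.sum_add_distrib, hx, hy]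
    | smul a x _ hx =>
        simp only [Pi.smul_apply, smul_eq_mul, mul_left_comm, ← Finset.mul_sum, hx, mul_zero]
  have hsum0 : ∑ i, l i * α ^ (p i) = 0 := hspan _ hv
  -- the support of l
  set F := Finset.univ.filter (fun i : Fin n => l i ≠ 0) with hF_def
  have hFne : F.Nonempty := ⟨i₀, by simp [hF_def, hi₀]⟩
  set j := F.max' hFne with hj_def
  have hjF : j ∈ F := F.max'_mem hFne
  have hlj : l j ≠ 0 := (Finset.mem_filter.mp hjF).2
  have hsumF : ∑ i ∈ F, l i * α ^ (p i) = 0 := by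
    have heq : ∑ i ∈ F, l i * α ^ (p i) = ∑ i, l i * α ^ (p i) := by
      rw [hF_def]
      exact Finset.sum_filter_of_ne (fun x _ hf h0 => hf (by rw [h0, zero_mul]))
    rw [heq]
    exact hsum0
  have hsplit : l j * α ^ (p j) = -∑ i ∈ F.erase j, l i * α ^ (p i) := by
    have h := Finset.add_sum_erase F (fun i => l i * α ^ (p i)) hjF
    rw [hsumF] at h
    linarith
  have hljabs : |l j| = 1 := by
    rcases hmem j with h | h | h
    · rw [h]; norm_num
    · exact absurd h hlj
    · rw [h]; norm_num
  have hpowpos : (0 : ℝ) < α ^ (p j) := zpow_pos hαpos _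
  have hbound : α ^ (p j) ≤ ((F.erase j).card : ℝ) * α ^ (p j - 1) := by
    have h1 : α ^ (p j) = |l j * α ^ (p j)| := by
      rw [abs_mul, hljabs, one_mul, abs_of_pos hpowpos]
    rw [h1, hsplit, abs_neg]
    calc |∑ i ∈ F.erase j, l i * α ^ (p i)| ≤ ∑ i ∈ F.erase j, |l i * α ^ (p i)| :=
          Finset.abs_sum_le_sum_abs _ _
      _ ≤ ∑ _i ∈ F.erase j, α ^ (p j - 1) := by
          apply Finset.sum_le_sum
          intro i hi
          have hij : i ≠ j := Finset.ne_of_mem_erase hi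
          have hile : i ≤ j := Finset.le_max' F i (Finset.mem_of_mem_erase hi)
          have hilt : i < j := lt_of_le_of_ne hile hij
          have hple : p i ≤ p j - 1 := by
            have := hp hilt
            omega
          have hpow : α ^ (p i) ≤ α ^ (p j - 1) := zpow_le_zpow_right₀ hα1.le hple
          have hli : |l i| ≤ 1 := by
            rcases hmem i with h | h | h <;> rw [h] <;> norm_num
          rw [abs_mul, abs_of_pos (zpow_pos hαpos _)]
          calc |l i| * α ^ (p i) ≤ 1 * α ^ (p j - 1) := by
                apply mul_le_mul hli hpow (le_of_lt (zpow_pos hαpos _)) zero_le_one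
            _ = α ^ (p j - 1) := one_mul _
      _ = ((F.erase j).card : ℝ) * α ^ (p j - 1) := by
          rw [Finset.sum_const, nsmul_eq_mul]
  have hcard2 : ((F.erase j).card : ℝ) < α := by
    have h1 : (F.erase j).card < n := by
      have h2 : F.card ≤ n := by
        calc F.card ≤ (Finset.univ : Finset (Fin n)).card := Finset.card_le_card (Finset.filter_subset _ _)
          _ = n := by rw [Finset.card_univ, Fintype.card_fin]
      have h3 : (F.erase j).card < F.card := Finset.card_erase_lt_of_mem hjF
      omega
    calc ((F.erase j).card : ℝ) < (n : ℝ) := by exact_mod_cast h1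
      _ < α := hα
  have hfinal : ((F.erase j).card : ℝ) * α ^ (p j - 1) < α ^ (p j) := by
    have hpow1pos : (0 : ℝ) < α ^ (p j - 1) := zpow_pos hαpos _
    calc ((F.erase j).card : ℝ) * α ^ (p j - 1) < α * α ^ (p j - 1) :=
          mul_lt_mul_of_pos_right hcard2 hpow1pos
      _ = α ^ (p j) := by
          rw [mul_comm, ← zpow_add_one₀ (ne_of_gt hαpos)]
          congr 1
          omega
  linarith
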